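/- Let p > 1, a > 0, T > 0 with 4a(p-1)T < 1, and K ∈ ℝ, μ > 0, y ∈ ℝⁿ, ε > 0 with 4a(p-1)(T+ε) < 1. Then the function v(x,t) = K + μ (T+ε-t)^{-(n+p-2)/(2p-2)} exp(|x-y|²/(4(p-1)(T+ε-t))) is a classical solution of the normalized equation u_t = Δu + (p-2)⟨D²u Du, Du⟩/|Du|² at every point (x,t) with x ≠ y and 0 ≤ t ≤ T. -/

import Mathlib

open Real

open RealInnerProductSpace

lemma aux0 {n : ℕ} (y x : EuclideanSpace ℝ (Fin n)) :
    HasFDerivAt (fun z : EuclideanSpace ℝ (Fin n) => ‖z - y‖ ^ 2)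
      ((2 : ℝ) • (innerSL ℝ (x - y))) x := by
  have h0 : HasFDerivAt (fun z : EuclideanSpace ℝ (Fin n) => z - y)
      (ContinuousLinearMap.id ℝ _) x := (hasFDerivAt_id x).sub_const y
  have h1 := h0.inner ℝ h0
  have h2 : (fun z : EuclideanSpace ℝ (Fin n) => ⟪z - y, z - y⟫)
      = fun z : EuclideanSpace ℝ (Fin n) => ‖z - y‖ ^ 2 := by
    funext z; rw [real_inner_self_eq_norm_sq]
  rw [h2] at h1
  refine h1.congr_fderiv ?_
  ext u
  simp only [ContinuousLinearMap.smul_apply, innerSL_apply_apply, smul_eq_mul,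
    ContinuousLinearMap.comp_apply, ContinuousLinearMap.prod_apply, ContinuousLinearMap.id_apply,
    fderivInnerCLM_apply]
  rw [real_inner_comm u (x - y)]
  ring

lemma auxA {n : ℕ} (y x : EuclideanSpace ℝ (Fin n)) (K c b : ℝ) :
    HasFDerivAt (fun z : EuclideanSpace ℝ (Fin n) => K + c * Real.exp (b * ‖z - y‖ ^ 2))
      ((2 * b * c * Real.exp (b * ‖x - y‖ ^ 2)) • (innerSL ℝ (x - y))) x := by
  have h := ((((aux0 y x).const_mul b).exp).const_mul c).const_add K
  refine h.congr_fderiv ?_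
  ext u
  simp only [ContinuousLinearMap.smul_apply, innerSL_apply_apply, smul_eq_mul]
  ring

lemma auxB {n : ℕ} (y x u : EuclideanSpace ℝ (Fin n)) (K c b : ℝ) :
    fderiv ℝ (fun z : EuclideanSpace ℝ (Fin n) => K + c * Real.exp (b * ‖z - y‖ ^ 2)) x u
      = (2 * b * c * Real.exp (b * ‖x - y‖ ^ 2)) * ⟪x - y, u⟫ := by
  rw [(auxA y x K c b).fderiv]
  simp only [ContinuousLinearMap.smul_apply, innerSL_apply_apply, smul_eq_mul]

lemma auxC {n : ℕ} (y x u u' : EuclideanSpace ℝ (Fin n)) (K c b : ℝ) :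
    fderiv ℝ (fun z : EuclideanSpace ℝ (Fin n) =>
        fderiv ℝ (fun w : EuclideanSpace ℝ (Fin n) => K + c * Real.exp (b * ‖w - y‖ ^ 2)) z u) x u'
      = (2 * b * c * Real.exp (b * ‖x - y‖ ^ 2)) *
          (2 * b * ⟪x - y, u'⟫ * ⟪x - y, u⟫ + ⟪u', u⟫) := by
  have h1 : (fun z : EuclideanSpace ℝ (Fin n) =>
      fderiv ℝ (fun w : EuclideanSpace ℝ (Fin n) => K + c * Real.exp (b * ‖w - y‖ ^ 2)) z u)
      = fun z : EuclideanSpace ℝ (Fin n) =>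
        (2 * b * c * Real.exp (b * ‖z - y‖ ^ 2)) * ⟪z - y, u⟫ := by
    funext z; exact auxB y z u K c b
  rw [h1]
  have h0 : HasFDerivAt (fun z : EuclideanSpace ℝ (Fin n) => z - y)
      (ContinuousLinearMap.id ℝ _) x := (hasFDerivAt_id x).sub_const y
  have hf1 := (((aux0 y x).const_mul b).exp).const_mul (2 * b * c)
  have hf2 := h0.inner ℝ (hasFDerivAt_const u x)
  have h3 := (hf1.mul hf2).fderiv
  erw [h3]
  simp only [ContinuousLinearMap.add_apply, ContinuousLinearMap.smul_apply,
    ContinuousLinearMap.comp_apply, ContinuousLinearMap.prod_apply, ContinuousLinearMap.id_apply,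
    fderivInnerCLM_apply, innerSL_apply_apply, smul_eq_mul, ContinuousLinearMap.zero_apply,
    inner_zero_right]
  ring

lemma auxD {n : ℕ} (y x : EuclideanSpace ℝ (Fin n)) (K c b : ℝ) :
    gradient (fun z : EuclideanSpace ℝ (Fin n) => K + c * Real.exp (b * ‖z - y‖ ^ 2)) x
      = (2 * b * c * Real.exp (b * ‖x - y‖ ^ 2)) • (x - y) := by
  apply HasGradientAt.gradient
  rw [hasGradientAt_iff_hasFDerivAt]
  refine (auxA y x K c b).congr_fderiv ?_
  ext u
  simp only [InnerProductSpace.toDual_apply_apply, ContinuousLinearMap.smul_apply, innerSL_apply_apply,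
    smul_eq_mul, real_inner_smul_left]

set_option maxHeartbeats 1000000 in
lemma algAux (p nn S q E μ b c r P : ℝ) (hS : S ≠ 0) (hp1 : p - 1 ≠ 0) (hq : q ≠ 0)
    (hE : E ≠ 0) (hμ : μ ≠ 0) (hP : P ≠ 0) (h2p : 2 * p - 2 ≠ 0)
    (hb : b = 1 / (4 * (p - 1) * S)) (hc : c = μ * P) (hr : r = -(nn + p - 2) / (2 * p - 2)) :
    μ * (-1 * r * (P / S)) * E +
      μ * P * (E * ((0 * (4 * (p - 1) * S) - q * (4 * (p - 1) * (-1))) / (4 * (p - 1) * S) ^ 2)) =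
    2 * b * c * E * (2 * b * q + nn) +
      (p - 2) * (2 * b * c * E *
        (2 * b * (2 * b * c * E * q) * (2 * b * c * E * q) +
          2 * b * c * E * (2 * b * c * E * q))) / ((2 * b * c * E) ^ 2 * q) := by
  subst hb hc hr
  field_simp
  ring

/-- Let `p > 1`, `a > 0`, `T > 0` with `4a(p-1)T < 1`, and `K ∈ ℝ`, `μ > 0`,
`y ∈ ℝⁿ`, `ε > 0` with `4a(p-1)(T+ε) < 1`. Then
`v(x,t) = K + μ (T+ε-t)^{-(n+p-2)/(2p-2)} exp(|x-y|²/(4(p-1)(T+ε-t)))` is a classical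
solution of `u_t = Δu + (p-2)⟨D²u Du, Du⟩/|Du|²` at every `(x,t)` with `x ≠ y`,
`0 ≤ t ≤ T`. -/
theorem stmt9 (n : ℕ) (p a T K μ ε : ℝ) (hp : 1 < p) (ha : 0 < a) (hT : 0 < T)
    (haT : 4 * a * (p - 1) * T < 1) (hμ : 0 < μ) (hε : 0 < ε)
    (haTε : 4 * a * (p - 1) * (T + ε) < 1)
    (y : EuclideanSpace ℝ (Fin n))
    (v : EuclideanSpace ℝ (Fin n) → ℝ → ℝ)
    (hv : v = fun x t => K + μ * (T + ε - t) ^ (-((n : ℝ) + p - 2) / (2 * p - 2)) *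
      Real.exp (‖x - y‖ ^ 2 / (4 * (p - 1) * (T + ε - t)))) :
    ∀ (x : EuclideanSpace ℝ (Fin n)) (t : ℝ), x ≠ y → 0 ≤ t → t ≤ T →
      deriv (v x) t =
        (∑ i : Fin n,
          fderiv ℝ (fun z => fderiv ℝ (fun w => v w t) z (EuclideanSpace.single i 1)) x
            (EuclideanSpace.single i 1))
        + (p - 2) *
          (fderiv ℝ (fun z => fderiv ℝ (fun w => v w t) z (gradient (fun w => v w t) x)) x
            (gradient (fun w => v w t) x)) / ‖gradient (fun w => v w t) x‖ ^ 2 := by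
  intro x t hxy ht0 htT
  have hp1 : (0:ℝ) < p - 1 := by linarith
  have hs : (0:ℝ) < T + ε - t := by linarith
  set r : ℝ := -((n : ℝ) + p - 2) / (2 * p - 2) with hr
  set c : ℝ := μ * (T + ε - t) ^ r with hcdef
  set b : ℝ := 1 / (4 * (p - 1) * (T + ε - t)) with hbdef
  have hfun : (fun w => v w t)
      = fun z : EuclideanSpace ℝ (Fin n) => K + c * Real.exp (b * ‖z - y‖ ^ 2) := by
    funext z
    rw [hv, hcdef, hbdef, hr]
    show K + μ * (T + ε - t) ^ (-((n : ℝ) + p - 2) / (2 * p - 2)) *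
        Real.exp (‖z - y‖ ^ 2 / (4 * (p - 1) * (T + ε - t)))
      = K + μ * (T + ε - t) ^ (-((n : ℝ) + p - 2) / (2 * p - 2)) *
        Real.exp (1 / (4 * (p - 1) * (T + ε - t)) * ‖z - y‖ ^ 2)
    rw [show ‖z - y‖ ^ 2 / (4 * (p - 1) * (T + ε - t))
        = 1 / (4 * (p - 1) * (T + ε - t)) * ‖z - y‖ ^ 2 by ring]
  rw [hfun, auxD y x K c b]
  -- Laplacian term
  have hq : ∑ i : Fin n, (x - y) i * (x - y) i = ‖x - y‖ ^ 2 := by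
    rw [← real_inner_self_eq_norm_sq]
    simp only [PiLp.inner_apply, RCLike.inner_apply, conj_trivial]
  have hlap : (∑ i : Fin n, fderiv ℝ (fun z : EuclideanSpace ℝ (Fin n) => fderiv ℝ
        (fun w : EuclideanSpace ℝ (Fin n) => K + c * Real.exp (b * ‖w - y‖ ^ 2)) z
        (EuclideanSpace.single i 1)) x (EuclideanSpace.single i 1))
      = (2 * b * c * Real.exp (b * ‖x - y‖ ^ 2)) * (2 * b * ‖x - y‖ ^ 2 + n) := by
    have hterm : ∀ i : Fin n, fderiv ℝ (fun z : EuclideanSpace ℝ (Fin n) => fderiv ℝ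
        (fun w : EuclideanSpace ℝ (Fin n) => K + c * Real.exp (b * ‖w - y‖ ^ 2)) z
        (EuclideanSpace.single i 1)) x (EuclideanSpace.single i 1)
        = (2 * b * c * Real.exp (b * ‖x - y‖ ^ 2)) * (2 * b * ((x - y) i * (x - y) i) + 1) := by
      intro i
      rw [auxC y x (EuclideanSpace.single i 1) (EuclideanSpace.single i 1) K c b]
      have e1 : ⟪x - y, (EuclideanSpace.single i 1 : EuclideanSpace ℝ (Fin n))⟫ = (x - y) i := by
        simp [EuclideanSpace.inner_single_right]
      have e2 : ⟪(EuclideanSpace.single i 1 : EuclideanSpace ℝ (Fin n)),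
          (EuclideanSpace.single i 1 : EuclideanSpace ℝ (Fin n))⟫ = 1 := by
        simp [EuclideanSpace.inner_single_left, EuclideanSpace.single_apply]
      rw [e1, e2]
      ring
    rw [Finset.sum_congr rfl fun i _ => hterm i]
    calc ∑ i : Fin n, (2 * b * c * Real.exp (b * ‖x - y‖ ^ 2)) * (2 * b * ((x - y) i * (x - y) i) + 1)
        = ∑ i : Fin n, (((2 * b * c * Real.exp (b * ‖x - y‖ ^ 2)) * (2 * b)) * ((x - y) i * (x - y) i)
            + (2 * b * c * Real.exp (b * ‖x - y‖ ^ 2))) := by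
          refine Finset.sum_congr rfl fun i _ => by ring
      _ = ((2 * b * c * Real.exp (b * ‖x - y‖ ^ 2)) * (2 * b)) * (∑ i : Fin n, (x - y) i * (x - y) i)
            + n * (2 * b * c * Real.exp (b * ‖x - y‖ ^ 2)) := by
          rw [Finset.sum_add_distrib, ← Finset.mul_sum, Finset.sum_const, Finset.card_univ,
            Fintype.card_fin, nsmul_eq_mul]
      _ = (2 * b * c * Real.exp (b * ‖x - y‖ ^ 2)) * (2 * b * ‖x - y‖ ^ 2 + n) := by
          rw [hq]; ring
  rw [hlap]
  -- gradient term
  have hgt : fderiv ℝ (fun z : EuclideanSpace ℝ (Fin n) => fderiv ℝ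
        (fun w : EuclideanSpace ℝ (Fin n) => K + c * Real.exp (b * ‖w - y‖ ^ 2)) z
        ((2 * b * c * Real.exp (b * ‖x - y‖ ^ 2)) • (x - y))) x
        ((2 * b * c * Real.exp (b * ‖x - y‖ ^ 2)) • (x - y))
      = (2 * b * c * Real.exp (b * ‖x - y‖ ^ 2)) *
          (2 * b * ((2 * b * c * Real.exp (b * ‖x - y‖ ^ 2)) * ‖x - y‖ ^ 2)
              * ((2 * b * c * Real.exp (b * ‖x - y‖ ^ 2)) * ‖x - y‖ ^ 2)
            + (2 * b * c * Real.exp (b * ‖x - y‖ ^ 2)) *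
                ((2 * b * c * Real.exp (b * ‖x - y‖ ^ 2)) * ‖x - y‖ ^ 2)) := by
    rw [auxC]
    simp only [real_inner_smul_left, real_inner_smul_right, real_inner_self_eq_norm_sq,
      norm_smul, Real.norm_eq_abs, mul_pow, sq_abs]
    ring
  rw [hgt]
  have hnorm : ‖(2 * b * c * Real.exp (b * ‖x - y‖ ^ 2)) • (x - y)‖ ^ 2
      = (2 * b * c * Real.exp (b * ‖x - y‖ ^ 2)) ^ 2 * ‖x - y‖ ^ 2 := by
    rw [norm_smul, Real.norm_eq_abs, mul_pow, sq_abs]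
  rw [hnorm]
  -- time derivative
  have hD : HasDerivAt (v x)
      (μ * (-1 * r * (T + ε - t) ^ (r - 1)) *
          Real.exp (‖x - y‖ ^ 2 / (4 * (p - 1) * (T + ε - t)))
        + μ * (T + ε - t) ^ r *
          (Real.exp (‖x - y‖ ^ 2 / (4 * (p - 1) * (T + ε - t))) *
            ((0 * (4 * (p - 1) * (T + ε - t)) - ‖x - y‖ ^ 2 * (4 * (p - 1) * (-1))) /
              (4 * (p - 1) * (T + ε - t)) ^ 2))) t := by
    rw [hv, hr]
    have hst : HasDerivAt (fun τ : ℝ => T + ε - τ) (-1) t := (hasDerivAt_id t).const_sub (T + ε)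
    have h1 : HasDerivAt (fun τ : ℝ => (T + ε - τ) ^ (-((n : ℝ) + p - 2) / (2 * p - 2)))
        (-1 * (-((n : ℝ) + p - 2) / (2 * p - 2)) *
          (T + ε - t) ^ (-((n : ℝ) + p - 2) / (2 * p - 2) - 1)) t :=
      hst.rpow_const (Or.inl hs.ne')
    have hg : HasDerivAt (fun τ : ℝ => 4 * (p - 1) * (T + ε - τ)) (4 * (p - 1) * (-1)) t :=
      hst.const_mul (4 * (p - 1))
    have hgne : 4 * (p - 1) * (T + ε - t) ≠ 0 := by positivity
    have h2 := (hasDerivAt_const t (‖x - y‖ ^ 2)).div hg hgne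
    have h3 := h2.exp
    have h4 := (h1.const_mul μ).mul h3
    exact h4.const_add K
  rw [hD.deriv]
  have hexp : Real.exp (‖x - y‖ ^ 2 / (4 * (p - 1) * (T + ε - t)))
      = Real.exp (b * ‖x - y‖ ^ 2) := by
    congr 1
    rw [hbdef]; ring
  rw [hexp]
  rw [Real.rpow_sub hs r 1, Real.rpow_one]
  -- now pure algebra
  have hsne : T + ε - t ≠ 0 := hs.ne'
  have hQ : ‖x - y‖ ^ 2 ≠ 0 :=
    pow_ne_zero 2 (norm_ne_zero_iff.mpr (sub_ne_zero.mpr hxy))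
  have h4s : (0:ℝ) < 4 * (p - 1) * (T + ε - t) := by nlinarith
  have hbne : b ≠ 0 := by rw [hbdef]; exact one_div_ne_zero h4s.ne'
  have hcne : c ≠ 0 := by
    rw [hcdef]
    have := Real.rpow_pos_of_pos hs r
    positivity
  have hEne : Real.exp (b * ‖x - y‖ ^ 2) ≠ 0 := Real.exp_ne_zero _
  have hrp : (T + ε - t) ^ r ≠ 0 := (Real.rpow_pos_of_pos hs r).ne'
  have h2p : 2 * p - 2 ≠ 0 := by intro h; apply hp1.ne'; linarith
  exact algAux p (n : ℝ) (T + ε - t) (‖x - y‖ ^ 2) (Real.exp (b * ‖x - y‖ ^ 2)) μ b c r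
    ((T + ε - t) ^ r) hsne hp1.ne' hQ hEne hμ.ne' hrp h2p hbdef hcdef hr
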